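/- Existence and uniqueness of the mild solution on a compact interval: Let (T(t))_{t≥0} be an exponentially stable C₀-semigroup on Y with constants M ≥ 1 and α > 0, let s₀ < S be reals and y₀ ∈ Y. Let F : [s₀,S] × Y × Y → Y be continuous with ‖F(s,x₁,y₁) − F(s,x₂,y₂)‖ ≤ L_F(s)·(‖x₁−x₂‖ + ‖y₁−y₂‖) for all s ∈ [s₀,S] and x_i, y_i ∈ Y, where L_F : [s₀,S] → [0,∞) is continuous; let H : [s₀,S] × [s₀,S] × Y → Y be continuous with ‖H(t,s,y₁) − H(t,s,y₂)‖ ≤ L_H(s)·‖y₁−y₂‖ for all t, s ∈ [s₀,S] and y₁, y₂ ∈ Y, where L_H : [s₀,S] → [0,∞) is continuous. Set L_F* = sup L_F and L_H* = sup L_H, and assume M_F := sup{ ‖F(s,0,z)‖ : s ∈ [s₀,S], z ∈ Y } < ∞ and M·(S−s₀)·L_F*·(1 + L_H*·(S−s₀)) < 1. Then there exists a unique continuous function y : [s₀,S] → Y satisfying y(s) = T(s−s₀) y₀ + ∫_{s₀}^s T(s−t)·F( t, y(t), ∫_{s₀}^t H(t,τ,y(τ)) dτ ) dt for all s ∈ [s₀,S].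 -/

import Mathlib

open Filter Topology MeasureTheory intervalIntegral

/-- Existence and uniqueness of the mild solution on a compact interval `[s₀, S]`:
under Lipschitz conditions on `F` and `H` and the smallness condition
`M (S - s₀) L_F* (1 + L_H* (S - s₀)) < 1`, there is a unique continuous
`y : [s₀, S] → Y` with
`y s = T (s - s₀) y₀ + ∫_{s₀}^s T (s - t) F (t, y t, ∫_{s₀}^t H (t, τ, y τ) dτ) dt`. -/
theorem exists_unique_mild_solution_interval
    {Y : Type*} [NormedAddCommGroup Y] [NormedSpace ℝ Y] [CompleteSpace Y]
    (T : ℝ → Y →L[ℝ] Y) (M α : ℝ) (hM : 1 ≤ M) (hα : 0 < α)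
    (hT0 : T 0 = ContinuousLinearMap.id ℝ Y)
    (hTadd : ∀ t ≥ (0 : ℝ), ∀ s ≥ (0 : ℝ), T (t + s) = (T t).comp (T s))
    (hTcont : ∀ x : Y, ContinuousOn (fun t => T t x) (Set.Ici (0 : ℝ)))
    (hTbound : ∀ t ≥ (0 : ℝ), ‖T t‖ ≤ M * Real.exp (-α * t))
    (s₀ S : ℝ) (hs₀S : s₀ < S) (y₀ : Y)
    (F : ℝ → Y → Y → Y)
    (hFcont : ContinuousOn (fun p : ℝ × Y × Y => F p.1 p.2.1 p.2.2)
      (Set.Icc s₀ S ×ˢ (Set.univ : Set (Y × Y))))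
    (LF : ℝ → ℝ) (hLFcont : ContinuousOn LF (Set.Icc s₀ S))
    (hLF0 : ∀ s ∈ Set.Icc s₀ S, 0 ≤ LF s)
    (hFlip : ∀ s ∈ Set.Icc s₀ S, ∀ x₁ x₂ y₁ y₂ : Y,
      ‖F s x₁ y₁ - F s x₂ y₂‖ ≤ LF s * (‖x₁ - x₂‖ + ‖y₁ - y₂‖))
    (H : ℝ → ℝ → Y → Y)
    (hHcont : ContinuousOn (fun p : ℝ × ℝ × Y => H p.1 p.2.1 p.2.2)
      (Set.Icc s₀ S ×ˢ Set.Icc s₀ S ×ˢ (Set.univ : Set Y)))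
    (LH : ℝ → ℝ) (hLHcont : ContinuousOn LH (Set.Icc s₀ S))
    (hLH0 : ∀ s ∈ Set.Icc s₀ S, 0 ≤ LH s)
    (hHlip : ∀ t ∈ Set.Icc s₀ S, ∀ s ∈ Set.Icc s₀ S, ∀ y₁ y₂ : Y,
      ‖H t s y₁ - H t s y₂‖ ≤ LH s * ‖y₁ - y₂‖)
    (MF : ℝ) (hMF : ∀ s ∈ Set.Icc s₀ S, ∀ z : Y, ‖F s 0 z‖ ≤ MF)
    (hsmall : M * (S - s₀) * sSup (LF '' Set.Icc s₀ S) *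
      (1 + sSup (LH '' Set.Icc s₀ S) * (S - s₀)) < 1) :
    ∃ y : ℝ → Y,
      (ContinuousOn y (Set.Icc s₀ S) ∧
        ∀ s ∈ Set.Icc s₀ S,
          y s = T (s - s₀) y₀ +
            ∫ t in s₀..s, T (s - t) (F t (y t) (∫ τ in s₀..t, H t τ (y τ)))) ∧
      ∀ z : ℝ → Y, ContinuousOn z (Set.Icc s₀ S) →
        (∀ s ∈ Set.Icc s₀ S,
          z s = T (s - s₀) y₀ +
            ∫ t in s₀..s, T (s - t) (F t (z t) (∫ τ in s₀..t, H t τ (z τ)))) →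
        ∀ s ∈ Set.Icc s₀ S, z s = y s := by
  have hle : s₀ ≤ S := hs₀S.le
  have hM0 : (0 : ℝ) < M := lt_of_lt_of_le one_pos hM
  -- the clamping projection onto `[s₀, S]`
  set pj : ℝ → ℝ := fun t => max s₀ (min S t) with hpj_def
  have hpj_mem : ∀ t, pj t ∈ Set.Icc s₀ S := fun t =>
    ⟨le_max_left _ _, max_le hle (min_le_left _ _)⟩
  have hpj_eq : ∀ t ∈ Set.Icc s₀ S, pj t = t := by
    intro t ht
    simp only [hpj_def]
    rw [min_eq_right ht.2, max_eq_right ht.1]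
  have hpj_cont : Continuous pj := by fun_prop
  -- the clamped semigroup
  set Tc : ℝ → Y →L[ℝ] Y := fun u => T (max u 0) with hTc_def
  have hTc_eq : ∀ u : ℝ, 0 ≤ u → Tc u = T u := by
    intro u hu; simp only [hTc_def]; rw [max_eq_left hu]
  have hTc_norm : ∀ u, ‖Tc u‖ ≤ M := by
    intro u
    refine (hTbound _ (le_max_right _ _)).trans ?_
    have hm0 : (0 : ℝ) ≤ max u 0 := le_max_right u 0
    have h1 : Real.exp (-α * max u 0) ≤ 1 := Real.exp_le_one_iff.2 (by nlinarith)
    nlinarith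
  have hTc_cont : Continuous fun p : ℝ × Y => Tc p.1 p.2 := by
    rw [continuous_iff_continuousAt]
    rintro ⟨t₀, x₀⟩
    have h1 : Continuous fun t : ℝ => Tc t x₀ :=
      (hTcont x₀).comp_continuous (f := fun t : ℝ => max t 0)
        (by fun_prop) (fun t => le_max_right t 0)
    have heq : (fun p : ℝ × Y => Tc p.1 p.2)
        = fun p : ℝ × Y => Tc p.1 x₀ + Tc p.1 (p.2 - x₀) := by
      funext p; rw [← map_add, add_sub_cancel]
    rw [heq]
    have h2 : Filter.Tendsto (fun p : ℝ × Y => Tc p.1 (p.2 - x₀))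
        (𝓝 (t₀, x₀)) (𝓝 0) := by
      apply squeeze_zero_norm (f := fun p : ℝ × Y => Tc p.1 (p.2 - x₀))
        (a := fun p : ℝ × Y => M * ‖p.2 - x₀‖)
      · intro p
        exact ((Tc p.1).le_opNorm _).trans
          (mul_le_mul_of_nonneg_right (hTc_norm p.1) (norm_nonneg _))
      · have hc : Continuous (fun p : ℝ × Y => M * ‖p.2 - x₀‖) := by fun_prop
        have h := hc.continuousAt (x := (t₀, x₀))
        simpa [ContinuousAt] using h
    have h3 : Filter.Tendsto (fun p : ℝ × Y => Tc p.1 x₀) (𝓝 (t₀, x₀))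
        (𝓝 (Tc t₀ x₀)) := (h1.comp continuous_fst).continuousAt
    have h4 := h3.add h2
    simpa [ContinuousAt] using h4
  -- continuity of the clamped nonlinearities
  have hFc_cont : Continuous fun p : ℝ × Y × Y => F (pj p.1) p.2.1 p.2.2 := by
    have h := hFcont.comp_continuous (f := fun p : ℝ × Y × Y => ((pj p.1 : ℝ), p.2))
      (by fun_prop) (fun p => ⟨hpj_mem _, Set.mem_univ _⟩)
    exact h
  have hHc_cont : Continuous fun p : ℝ × ℝ × Y => H (pj p.1) (pj p.2.1) p.2.2 := by
    have h := hHcont.comp_continuous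
      (f := fun p : ℝ × ℝ × Y => ((pj p.1 : ℝ), (pj p.2.1 : ℝ), p.2.2))
      (by fun_prop) (fun p => ⟨hpj_mem _, hpj_mem _, Set.mem_univ _⟩)
    exact h
  -- the inner (Volterra) integral operator
  set G : (ℝ → Y) → ℝ → Y := fun w t => ∫ τ in s₀..t, H (pj t) (pj τ) (w τ) with hG_def
  have hG_cont : ∀ w : ℝ → Y, Continuous w → Continuous (G w) := by
    intro w hw
    apply intervalIntegral.continuous_parametric_intervalIntegral_of_continuous (μ := volume)
      (f := fun t τ => H (pj t) (pj τ) (w τ)) ?_ continuous_id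
    exact hHc_cont.comp
      (continuous_fst.prodMk (continuous_snd.prodMk (hw.comp continuous_snd)))
  -- the Picard map on raw functions
  set P : (ℝ → Y) → ℝ → Y := fun w s =>
    Tc (s - s₀) y₀ + ∫ t in s₀..s, Tc (s - t) (F (pj t) (w t) (G w t)) with hP_def
  have hInt_cont : ∀ w : ℝ → Y, Continuous w →
      Continuous fun t : ℝ => F (pj t) (w t) (G w t) := by
    intro w hw
    exact hFc_cont.comp (continuous_id.prodMk (hw.prodMk (hG_cont w hw)))
  have hP_cont : ∀ w : ℝ → Y, Continuous w → Continuous (P w) := by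
    intro w hw
    simp only [hP_def]
    apply Continuous.add
    · exact hTc_cont.comp ((continuous_id.sub continuous_const).prodMk continuous_const)
    · apply intervalIntegral.continuous_parametric_intervalIntegral_of_continuous (μ := volume)
        (f := fun s t => Tc (s - t) (F (pj t) (w t) (G w t))) ?_ continuous_id
      exact hTc_cont.comp ((continuous_fst.sub continuous_snd).prodMk
        ((hInt_cont w hw).comp continuous_snd))
  -- the Picard map agrees with the unclamped formula on `[s₀, S]`
  have hPeq : ∀ w : ℝ → Y, ∀ s ∈ Set.Icc s₀ S,
      P w s = T (s - s₀) y₀ +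
        ∫ t in s₀..s, T (s - t) (F t (w t) (∫ τ in s₀..t, H t τ (w τ))) := by
    intro w s hs
    simp only [hP_def]
    congr 1
    · rw [hTc_eq _ (sub_nonneg.2 hs.1)]
    · apply intervalIntegral.integral_congr
      intro t ht
      rw [Set.uIcc_of_le hs.1] at ht
      have htI : t ∈ Set.Icc s₀ S := ⟨ht.1, ht.2.trans hs.2⟩
      have hGt : G w t = ∫ τ in s₀..t, H t τ (w τ) := by
        simp only [hG_def]
        apply intervalIntegral.integral_congr
        intro τ hτ
        rw [Set.uIcc_of_le ht.1] at hτ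
        dsimp only
        rw [hpj_eq t htI, hpj_eq τ ⟨hτ.1, hτ.2.trans htI.2⟩]
      dsimp only
      rw [hGt, hTc_eq _ (sub_nonneg.2 ht.2), hpj_eq t htI]
  -- the complete metric space of continuous functions on `[s₀, S]`
  haveI : Nonempty C(Set.Icc s₀ S, Y) := ⟨ContinuousMap.const _ 0⟩
  -- extension operator
  set ext : C(Set.Icc s₀ S, Y) → ℝ → Y := fun u t => u ⟨pj t, hpj_mem t⟩ with hext_def
  have hext_cont : ∀ u, Continuous (ext u) := fun u =>
    u.continuous.comp (hpj_cont.subtype_mk _)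
  have hext_dist : ∀ u v t, ‖ext u t - ext v t‖ ≤ dist u v := by
    intro u v t
    rw [← dist_eq_norm]
    exact ContinuousMap.dist_apply_le_dist _
  set Φ : C(Set.Icc s₀ S, Y) → C(Set.Icc s₀ S, Y) := fun u =>
    ⟨fun s => P (ext u) s.val,
      (hP_cont _ (hext_cont u)).comp continuous_subtype_val⟩ with hΦ_def
  -- the Lipschitz constants and the contraction constant
  set LFs := sSup (LF '' Set.Icc s₀ S) with hLFs_def
  set LHs := sSup (LH '' Set.Icc s₀ S) with hLHs_def
  have hs₀I : s₀ ∈ Set.Icc s₀ S := ⟨le_rfl, hle⟩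
  have hLFub : ∀ t ∈ Set.Icc s₀ S, LF t ≤ LFs := fun t ht =>
    le_csSup (isCompact_Icc.image_of_continuousOn hLFcont).bddAbove ⟨t, ht, rfl⟩
  have hLFs0 : 0 ≤ LFs := (hLF0 s₀ hs₀I).trans (hLFub s₀ hs₀I)
  have hLHub : ∀ t ∈ Set.Icc s₀ S, LH t ≤ LHs := fun t ht =>
    le_csSup (isCompact_Icc.image_of_continuousOn hLHcont).bddAbove ⟨t, ht, rfl⟩
  have hLHs0 : 0 ≤ LHs := (hLH0 s₀ hs₀I).trans (hLHub s₀ hs₀I)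
  have hSs : (0 : ℝ) ≤ S - s₀ := sub_nonneg.2 hle
  set k := M * (S - s₀) * LFs * (1 + LHs * (S - s₀)) with hk_def
  have hk0 : (0 : ℝ) ≤ k := by
    have h1 : (0 : ℝ) ≤ 1 + LHs * (S - s₀) :=
      add_nonneg zero_le_one (mul_nonneg hLHs0 hSs)
    exact mul_nonneg (mul_nonneg (mul_nonneg hM0.le hSs) hLFs0) h1
  -- key estimates
  have hHd : ∀ (u v : C(Set.Icc s₀ S, Y)) (t τ : ℝ),
      ‖H (pj t) (pj τ) (ext u τ) - H (pj t) (pj τ) (ext v τ)‖ ≤ LHs * dist u v := by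
    intro u v t τ
    refine (hHlip _ (hpj_mem t) _ (hpj_mem τ) _ _).trans ?_
    exact mul_le_mul (hLHub _ (hpj_mem τ)) (hext_dist u v τ) (norm_nonneg _) hLHs0
  have hHint : ∀ (u : C(Set.Icc s₀ S, Y)) (t : ℝ),
      IntervalIntegrable (fun τ => H (pj t) (pj τ) (ext u τ)) volume s₀ t := by
    intro u t
    exact (hHc_cont.comp (continuous_const.prodMk
      (continuous_id.prodMk (hext_cont u)))).intervalIntegrable _ _
  have hGd : ∀ (u v : C(Set.Icc s₀ S, Y)), ∀ t ∈ Set.Icc s₀ S,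
      ‖G (ext u) t - G (ext v) t‖ ≤ LHs * (S - s₀) * dist u v := by
    intro u v t ht
    have hdiff : G (ext u) t - G (ext v) t = ∫ τ in s₀..t,
        (H (pj t) (pj τ) (ext u τ) - H (pj t) (pj τ) (ext v τ)) := by
      simp only [hG_def]
      rw [intervalIntegral.integral_sub (hHint u t) (hHint v t)]
    rw [hdiff]
    refine (intervalIntegral.norm_integral_le_of_norm_le_const
      (C := LHs * dist u v) (fun τ _ => hHd u v t τ)).trans ?_
    have habs : |t - s₀| ≤ S - s₀ := by
      rw [abs_of_nonneg (sub_nonneg.2 ht.1)]; linarith [ht.2]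
    calc LHs * dist u v * |t - s₀| ≤ LHs * dist u v * (S - s₀) := by
          exact mul_le_mul_of_nonneg_left habs (mul_nonneg hLHs0 dist_nonneg)
      _ = LHs * (S - s₀) * dist u v := by ring
  -- the contraction estimate
  have hkey : ∀ u v, dist (Φ u) (Φ v) ≤ k * dist u v := by
    intro u v
    rw [ContinuousMap.dist_le (mul_nonneg hk0 dist_nonneg)]
    rintro ⟨s, hs⟩
    rw [dist_eq_norm]
    have hfu : IntervalIntegrable
        (fun t => Tc (s - t) (F (pj t) (ext u t) (G (ext u) t))) volume s₀ s := by
      apply Continuous.intervalIntegrable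
      exact hTc_cont.comp ((continuous_const.sub continuous_id).prodMk
        (hInt_cont _ (hext_cont u)))
    have hfv : IntervalIntegrable
        (fun t => Tc (s - t) (F (pj t) (ext v t) (G (ext v) t))) volume s₀ s := by
      apply Continuous.intervalIntegrable
      exact hTc_cont.comp ((continuous_const.sub continuous_id).prodMk
        (hInt_cont _ (hext_cont v)))
    have hdiff : Φ u ⟨s, hs⟩ - Φ v ⟨s, hs⟩ = ∫ t in s₀..s,
        (Tc (s - t) (F (pj t) (ext u t) (G (ext u) t))
          - Tc (s - t) (F (pj t) (ext v t) (G (ext v) t))) := by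
      show P (ext u) s - P (ext v) s = _
      simp only [hP_def]
      rw [intervalIntegral.integral_sub hfu hfv]
      abel
    rw [hdiff]
    have hD0 : (0 : ℝ) ≤ dist u v := dist_nonneg
    refine (intervalIntegral.norm_integral_le_of_norm_le_const
      (C := M * (LFs * ((1 + LHs * (S - s₀)) * dist u v))) ?_).trans ?_
    · intro t ht
      rw [Set.uIoc_of_le hs.1] at ht
      have htI : t ∈ Set.Icc s₀ S := ⟨ht.1.le, ht.2.trans hs.2⟩
      rw [← map_sub]
      refine ((Tc (s - t)).le_opNorm _).trans ?_
      refine mul_le_mul (hTc_norm _) ?_ (norm_nonneg _) hM0.le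
      refine (hFlip _ (hpj_mem t) _ _ _ _).trans ?_
      refine mul_le_mul (hLFub _ (hpj_mem t)) ?_
        (add_nonneg (norm_nonneg _) (norm_nonneg _)) hLFs0
      have h1 := hext_dist u v t
      have h2 := hGd u v t htI
      nlinarith
    · have habs : |s - s₀| ≤ S - s₀ := by
        rw [abs_of_nonneg (sub_nonneg.2 hs.1)]; linarith [hs.2]
      have hC0 : (0 : ℝ) ≤ M * (LFs * ((1 + LHs * (S - s₀)) * dist u v)) := by
        have h1 : (0 : ℝ) ≤ 1 + LHs * (S - s₀) :=
          add_nonneg zero_le_one (mul_nonneg hLHs0 hSs)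
        exact mul_nonneg hM0.le (mul_nonneg hLFs0 (mul_nonneg h1 hD0))
      calc M * (LFs * ((1 + LHs * (S - s₀)) * dist u v)) * |s - s₀|
          ≤ M * (LFs * ((1 + LHs * (S - s₀)) * dist u v)) * (S - s₀) :=
            mul_le_mul_of_nonneg_left habs hC0
        _ = k * dist u v := by rw [hk_def]; ring
  -- the contraction and its fixed point
  have hcon : ContractingWith ⟨k, hk0⟩ Φ := by
    constructor
    · exact_mod_cast hsmall
    · exact LipschitzWith.of_dist_le_mul hkey
  set u₀ := ContractingWith.fixedPoint Φ hcon with hu₀_def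
  have hfix : Φ u₀ = u₀ := hcon.fixedPoint_isFixedPt
  refine ⟨ext u₀, ⟨(hext_cont u₀).continuousOn, ?_⟩, ?_⟩
  · intro s hs
    have h1 : ext u₀ s = Φ u₀ ⟨s, hs⟩ := by
      rw [hfix]
      simp only [hext_def]
      congr 1
      exact Subtype.ext (hpj_eq s hs)
    rw [h1]
    show P (ext u₀) s = _
    exact hPeq (ext u₀) s hs
  · intro z hzc hzeq s hs
    set v : C(Set.Icc s₀ S, Y) := ⟨fun p => z p.val, hzc.restrict⟩ with hv_def
    have hvx : ∀ t ∈ Set.Icc s₀ S, ext v t = z t := by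
      intro t ht
      simp only [hext_def, hv_def, ContinuousMap.coe_mk]
      exact congrArg z (hpj_eq t ht)
    have hvfix : Φ v = v := by
      ext p
      obtain ⟨s', hs'⟩ := p
      show P (ext v) s' = z s'
      rw [hPeq (ext v) s' hs', hzeq s' hs']
      congr 1
      apply intervalIntegral.integral_congr
      intro t ht
      rw [Set.uIcc_of_le hs'.1] at ht
      have htI : t ∈ Set.Icc s₀ S := ⟨ht.1, ht.2.trans hs'.2⟩
      have hinner : (∫ τ in s₀..t, H t τ (ext v τ)) = ∫ τ in s₀..t, H t τ (z τ) := by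
        apply intervalIntegral.integral_congr
        intro τ hτ
        rw [Set.uIcc_of_le ht.1] at hτ
        dsimp only
        rw [hvx τ ⟨hτ.1, hτ.2.trans htI.2⟩]
      dsimp only
      rw [hvx t htI, hinner]
    have huv : v = u₀ := hcon.fixedPoint_unique hvfix
    have hz : z s = v ⟨s, hs⟩ := rfl
    rw [hz, huv]
    simp only [hext_def]
    congr 1
    exact Subtype.ext (hpj_eq s hs).symm
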